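/- For all integers n ≥ m ≥ 2, the number of fuzzy topologies on an n-element set X with membership values in an m-element chain M having exactly m^n − m^(n−2) open sets is τ_F(n, m, m^n − m^(n−2)) = n(n−1). Equivalently, there are exactly n(n−1) non-discrete fuzzy topologies of maximal cardinality, each having m^n − m^(n−2) open sets. -/

import Mathlib

/-- A fuzzy topology on `Fin n` with membership values in the `m`-element chain `Fin m`:
a collection of fuzzy sets (functions `Fin n → Fin m`) containing the constant function
with the least value, the constant function with the greatest value, and closed under
pointwise (binary) supremum and infimum. -/
def IsFuzzyTopology {n m : ℕ} (hm : m ≠ 0) (τ : Finset (Fin n → Fin m)) : Prop :=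
  (fun _ => (⟨0, Nat.pos_of_ne_zero hm⟩ : Fin m)) ∈ τ ∧
  (fun _ => (⟨m - 1, by omega⟩ : Fin m)) ∈ τ ∧
  (∀ f ∈ τ, ∀ g ∈ τ, f ⊔ g ∈ τ) ∧
  (∀ f ∈ τ, ∀ g ∈ τ, f ⊓ g ∈ τ)

/-- `tauF n m k hm` is the number of fuzzy topologies on an `n`-element set with values in an
`m`-element chain having exactly `k` open sets. -/
noncomputable def tauF (n m k : ℕ) (hm : m ≠ 0) : ℕ :=
  Nat.card {τ : Finset (Fin n → Fin m) // IsFuzzyTopology hm τ ∧ τ.card = k}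

/-- `biTauF n m k hm` is the number of fuzzy bitopological spaces (unordered pairs of fuzzy
topologies, allowing equal ones) on an `n`-element set with values in an `m`-element chain in
which both topologies have exactly `k` open sets. -/
noncomputable def biTauF (n m k : ℕ) (hm : m ≠ 0) : ℕ :=
  Nat.card (Sym2 {τ : Finset (Fin n → Fin m) // IsFuzzyTopology hm τ ∧ τ.card = k})

namespace FuzzyAux

variable {n m : ℕ}

def bo (m : ℕ) (hm : m ≠ 0) : Fin m := ⟨0, Nat.pos_of_ne_zero hm⟩
def tp (m : ℕ) (hm : m ≠ 0) : Fin m := ⟨m - 1, by omega⟩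

lemma bo_le (hm : m ≠ 0) (a : Fin m) : bo m hm ≤ a := by
  simp [bo, Fin.le_def]

lemma le_tp (hm : m ≠ 0) (a : Fin m) : a ≤ tp m hm := by
  have := a.2; simp [tp, Fin.le_def]; omega

lemma ne0 (hm2 : 2 ≤ m) : m ≠ 0 := by omega

lemma bo_ne_tp (hm2 : 2 ≤ m) : bo m (ne0 hm2) ≠ tp m (ne0 hm2) := by
  simp [bo, tp, Fin.ext_iff]; omega

lemma card_univ_fun : (Finset.univ : Finset (Fin n → Fin m)).card = m ^ n := by
  rw [Finset.card_univ, Fintype.card_fun, Fintype.card_fin, Fintype.card_fin]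

lemma card_eval_eq (i : Fin n) (a : Fin m) :
    (Finset.univ.filter (fun f : Fin n → Fin m => f i = a)).card = m ^ (n - 1) := by
  rw [← Fintype.card_subtype]
  have e : {f : Fin n → Fin m // f i = a} ≃ ({x : Fin n // ¬ x = i} → Fin m) :=
    { toFun := fun f x => f.1 x.1
      invFun := fun g => ⟨fun x => if h : x = i then a else g ⟨x, h⟩, by simp⟩
      left_inv := fun f => by
        apply Subtype.ext; funext x; dsimp only
        split_ifs with h
        · rw [h, f.2]
        · rfl
      right_inv := fun g => by funext x; dsimp only; rw [dif_neg x.2] }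
  rw [Fintype.card_congr e, Fintype.card_fun, Fintype.card_fin]
  congr 1
  rw [Fintype.card_subtype_compl, Fintype.card_subtype_eq, Fintype.card_fin]

lemma card_eval2_eq (i j : Fin n) (hij : i ≠ j) (a b : Fin m) :
    (Finset.univ.filter (fun f : Fin n → Fin m => f i = a ∧ f j = b)).card = m ^ (n - 2) := by
  rw [← Fintype.card_subtype]
  have e : {f : Fin n → Fin m // f i = a ∧ f j = b} ≃
      ({x : Fin n // ¬ (x = i ∨ x = j)} → Fin m) :=
    { toFun := fun f x => f.1 x.1
      invFun := fun g =>
        ⟨fun x => if h : x = i then a else if h' : x = j then b else g ⟨x, by tauto⟩, by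
          constructor
          · dsimp only; rw [dif_pos rfl]
          · dsimp only; rw [dif_neg (fun h : j = i => hij h.symm), dif_pos rfl]⟩
      left_inv := fun f => by
        apply Subtype.ext; funext x; dsimp only
        split_ifs with h h'
        · rw [h, f.2.1]
        · rw [h', f.2.2]
        · rfl
      right_inv := fun g => by
        funext x
        have hx := x.2
        push_neg at hx
        dsimp only
        rw [dif_neg hx.1, dif_neg hx.2] }
  rw [Fintype.card_congr e, Fintype.card_fun, Fintype.card_fin]
  congr 1
  rw [Fintype.card_subtype_compl, Fintype.card_fin]
  congr 1
  rw [Fintype.card_subtype]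
  have : (Finset.univ.filter fun x : Fin n => x = i ∨ x = j) = {i, j} := by
    ext x; simp [Finset.mem_insert]
  rw [this, Finset.card_pair hij]


def DD (hm : m ≠ 0) (i j : Fin n) : Finset (Fin n → Fin m) :=
  Finset.univ.filter (fun f => ¬(f i = tp m hm ∧ f j = bo m hm))

lemma mem_DD {hm : m ≠ 0} {i j : Fin n} {f : Fin n → Fin m} :
    f ∈ DD hm i j ↔ ¬(f i = tp m hm ∧ f j = bo m hm) := by
  simp [DD]

lemma DD_topo (hm2 : 2 ≤ m) {i j : Fin n} (hij : i ≠ j) :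
    IsFuzzyTopology (ne0 hm2) (DD (ne0 hm2) i j) := by
  have hm : m ≠ 0 := by omega
  refine ⟨?_, ?_, ?_, ?_⟩
  · rw [mem_DD]
    rintro ⟨h, -⟩
    exact bo_ne_tp hm2 h
  · rw [mem_DD]
    rintro ⟨-, h⟩
    exact bo_ne_tp hm2 h.symm
  · intro f hf g hg
    rw [mem_DD] at hf hg ⊢
    rintro ⟨hi, hj⟩
    rw [Pi.sup_apply] at hi hj
    have hfj : f j = bo m hm :=
      le_antisymm (hj ▸ le_sup_left) (bo_le hm _)
    have hgj : g j = bo m hm :=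
      le_antisymm (hj ▸ le_sup_right) (bo_le hm _)
    rcases le_total (f i) (g i) with h | h
    · exact hg ⟨by rw [← sup_eq_right.mpr h, hi], hgj⟩
    · exact hf ⟨by rw [← sup_eq_left.mpr h, hi], hfj⟩
  · intro f hf g hg
    rw [mem_DD] at hf hg ⊢
    rintro ⟨hi, hj⟩
    rw [Pi.inf_apply] at hi hj
    have hfi : f i = tp m hm :=
      le_antisymm (le_tp hm _) (hi ▸ inf_le_left)
    have hgi : g i = tp m hm :=
      le_antisymm (le_tp hm _) (hi ▸ inf_le_right)
    rcases le_total (f j) (g j) with h | h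
    · exact hf ⟨hfi, by rw [← inf_eq_left.mpr h, hj]⟩
    · exact hg ⟨hgi, by rw [← inf_eq_right.mpr h, hj]⟩

lemma DD_card (hm : m ≠ 0) {i j : Fin n} (hij : i ≠ j) :
    (DD hm i j).card = m ^ n - m ^ (n - 2) := by
  unfold DD
  rw [Finset.filter_not, Finset.card_sdiff_of_subset (Finset.filter_subset _ _), card_univ_fun,
    card_eval2_eq i j hij]

lemma DD_inj (hm2 : 2 ≤ m) {i j i' j' : Fin n} (hij : i ≠ j) (hij' : i' ≠ j')
    (h : DD (ne0 hm2) i j = DD (ne0 hm2) i' j') : i = i' ∧ j = j' := by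
  have hm : m ≠ 0 := by omega
  have hZT := bo_ne_tp hm2
  set Z := bo m hm
  set T := tp m hm
  have hii : i = i' := by
    have hw : (fun x => if x = i then T else Z) ∉ DD hm i j := by
      rw [mem_DD]
      push_neg
      exact ⟨if_pos rfl, if_neg (fun hh : j = i => hij hh.symm)⟩
    rw [h, mem_DD] at hw
    push_neg at hw
    by_contra hne
    have h1 := hw.1
    rw [if_neg (fun hh : i' = i => hne hh.symm)] at h1
    exact hZT h1
  subst hii
  refine ⟨rfl, ?_⟩
  have hw : (fun x => if x = j then Z else T) ∉ DD hm i j := by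
    rw [mem_DD]
    push_neg
    exact ⟨if_neg hij, if_pos rfl⟩
  rw [h, mem_DD] at hw
  push_neg at hw
  by_contra hne
  have h2 := hw.2
  rw [if_neg (fun hh : j' = j => hne hh.symm)] at h2
  exact hZT h2.symm

def uu (hm : m ≠ 0) (i : Fin n) (t : Fin m) : Fin n → Fin m :=
  fun x => if x = i then t else bo m hm

lemma main_structure (hm2 : 2 ≤ m) (hn2 : 2 ≤ n) {τ : Finset (Fin n → Fin m)}
    (hτ : IsFuzzyTopology (ne0 hm2) τ)
    (hcard : τ.card = m ^ n - m ^ (n - 2)) :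
    ∃ i j : Fin n, i ≠ j ∧ τ = DD (ne0 hm2) i j := by
  have hm : m ≠ 0 := by omega
  obtain ⟨h0, h1, hsup, hinf⟩ := hτ
  have hpow_le : m ^ (n - 2) ≤ m ^ n := Nat.pow_le_pow_right (by omega) (by omega)
  have hpow_pos : 0 < m ^ (n - 2) := Nat.pow_pos (by omega)
  -- τ is proper
  have hne : τ ≠ Finset.univ := by
    intro hh
    rw [hh, card_univ_fun] at hcard
    omega
  -- some join-irreducible is missing
  have hmiss : ∃ (i : Fin n) (t : Fin m), uu hm i t ∉ τ := by
    by_contra hall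
    push_neg at hall
    apply hne
    apply Finset.eq_univ_of_forall
    intro f
    have hne' : (Finset.univ : Finset (Fin n)).Nonempty := ⟨⟨0, by omega⟩, Finset.mem_univ _⟩
    have hf : f = Finset.univ.sup' hne' (fun x => uu hm x (f x)) := by
      funext y
      rw [Finset.sup'_apply]
      apply le_antisymm
      · have := Finset.le_sup' (f := fun x => uu hm x (f x) y) (Finset.mem_univ y)
        rw [show uu hm y (f y) y = f y from if_pos rfl] at this
        exact this
      · apply Finset.sup'_le
        intro x _
        show (if y = x then f x else bo m hm) ≤ f y
        split_ifs with hyx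
        · rw [hyx]
        · exact bo_le hm _
    rw [hf]
    exact Finset.sup'_mem ↑τ (fun a ha b hb => hsup a ha b hb) _ hne' _
      (fun x _ => hall x (f x))
  obtain ⟨i, t, hu⟩ := hmiss
  -- inf of all members that are ≥ t at i
  set s : Finset (Fin n → Fin m) := τ.filter (fun h => t ≤ h i) with hs_def
  have hTs : (fun _ => tp m hm) ∈ s := by
    rw [hs_def, Finset.mem_filter]
    exact ⟨h1, le_tp hm t⟩
  have hs : s.Nonempty := ⟨_, hTs⟩
  set g : Fin n → Fin m := s.inf' hs id with hg_def
  have hgτ : g ∈ τ :=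
    Finset.inf'_mem ↑τ (fun a ha b hb => hinf a ha b hb) _ hs _
      (fun x hx => (Finset.mem_filter.mp hx).1)
  have hg_le : ∀ h ∈ τ, t ≤ h i → g ≤ h := fun h hh hth =>
    Finset.inf'_le id (Finset.mem_filter.mpr ⟨hh, hth⟩)
  have hgi : t ≤ g i := by
    rw [hg_def, Finset.inf'_apply]
    exact Finset.le_inf' _ _ (fun h hh => (Finset.mem_filter.mp hh).2)
  have hug : uu hm i t ≤ g := by
    intro y
    by_cases hy : y = i
    · subst hy
      rw [show uu hm y t y = t from if_pos rfl]
      exact hgi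
    · rw [show uu hm i t y = bo m hm from if_neg hy]
      exact bo_le hm _
  have hneq : uu hm i t ≠ g := fun hh => hu (hh ▸ hgτ)
  have hstrict : ∃ j, uu hm i t j < g j := by
    by_contra hc
    push_neg at hc
    exact hneq (funext fun y => le_antisymm (hug y) (hc y))
  obtain ⟨j, hj⟩ := hstrict
  have hrel : ∀ h ∈ τ, t ≤ h i → g j ≤ h j := fun h hh hth => hg_le h hh hth j
  by_cases hji : j = i
  · -- impossible: complement would be too big
    exfalso
    subst hji
    rw [show uu hm j t j = t from if_pos rfl] at hj
    have hsub : Finset.univ.filter (fun f : Fin n → Fin m => f j = t) ⊆ Finset.univ \ τ := by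
      intro f hf
      rw [Finset.mem_filter] at hf
      rw [Finset.mem_sdiff]
      refine ⟨Finset.mem_univ f, fun hfτ => ?_⟩
      have := hrel f hfτ (le_of_eq hf.2.symm)
      rw [hf.2] at this
      exact absurd this (not_le.mpr hj)
    have hc1 := Finset.card_le_card hsub
    rw [card_eval_eq, Finset.card_sdiff_of_subset (Finset.subset_univ τ), card_univ_fun, hcard] at hc1
    have h1' : m ^ (n - 1) ≤ m ^ (n - 2) := by omega
    have h2' : m ^ (n - 1) = m ^ (n - 2) * m := by
      rw [← pow_succ]
      congr 1
      omega
    nlinarith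
  · refine ⟨i, j, fun hh => hji hh.symm, ?_⟩
    rw [show uu hm i t j = bo m hm from if_neg hji] at hj
    have hBsub : Finset.univ.filter (fun f : Fin n → Fin m => f i = tp m hm ∧ f j = bo m hm)
        ⊆ Finset.univ \ τ := by
      intro f hf
      rw [Finset.mem_filter] at hf
      rw [Finset.mem_sdiff]
      refine ⟨Finset.mem_univ f, fun hfτ => ?_⟩
      have := hrel f hfτ (by rw [hf.2.1]; exact le_tp hm t)
      rw [hf.2.2] at this
      exact absurd this (not_le.mpr hj)
    have hcC : (Finset.univ \ τ).card = m ^ (n - 2) := by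
      rw [Finset.card_sdiff_of_subset (Finset.subset_univ τ), card_univ_fun, hcard]
      omega
    have hEq := Finset.eq_of_subset_of_card_le hBsub
      (by rw [hcC, card_eval2_eq i j (fun hh => hji hh.symm)])
    have hτeq : τ = Finset.univ \ (Finset.univ \ τ) := by
      rw [Finset.sdiff_sdiff_self_left, Finset.univ_inter]
    rw [hτeq, ← hEq, DD, Finset.filter_not]

end FuzzyAux

theorem tauF_maximal_nondiscrete (n m : ℕ) (hm : 2 ≤ m) (hnm : m ≤ n) :
    tauF n m (m ^ n - m ^ (n - 2)) (by omega) = n * (n - 1) := by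
  have hm0 : m ≠ 0 := by omega
  have hn2 : 2 ≤ n := by omega
  rw [tauF]
  let Φ : {p : Fin n × Fin n // p.1 ≠ p.2} →
      {τ : Finset (Fin n → Fin m) //
        IsFuzzyTopology (show m ≠ 0 by omega) τ ∧ τ.card = m ^ n - m ^ (n - 2)} :=
    fun p => ⟨FuzzyAux.DD hm0 p.1.1 p.1.2, FuzzyAux.DD_topo hm p.2, FuzzyAux.DD_card hm0 p.2⟩
  have hbij : Function.Bijective Φ := by
    constructor
    · intro p q hpq
      have h := congrArg Subtype.val hpq
      obtain ⟨h1, h2⟩ := FuzzyAux.DD_inj hm p.2 q.2 h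
      exact Subtype.ext (Prod.ext h1 h2)
    · rintro ⟨τ, hτ, hc⟩
      obtain ⟨i, j, hij, hτeq⟩ := FuzzyAux.main_structure hm hn2 hτ hc
      exact ⟨⟨(i, j), hij⟩, Subtype.ext hτeq.symm⟩
  rw [← Nat.card_eq_of_bijective Φ hbij, Nat.card_eq_fintype_card]
  have e : {p : Fin n × Fin n // p.1 = p.2} ≃ Fin n :=
    { toFun := fun p => p.1.1
      invFun := fun i => ⟨(i, i), rfl⟩
      left_inv := fun p => Subtype.ext (Prod.ext rfl p.2)
      right_inv := fun i => rfl }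
  have hcard : Fintype.card {p : Fin n × Fin n // ¬ p.1 = p.2} = n * n - n := by
    rw [Fintype.card_subtype_compl, Fintype.card_prod, Fintype.card_fin,
      Fintype.card_congr e, Fintype.card_fin]
  have hcard' : Fintype.card {p : Fin n × Fin n // p.1 ≠ p.2} = n * n - n :=
    (Fintype.card_congr (Equiv.subtypeEquivRight (fun _ => Iff.rfl))).trans hcard
  rw [hcard']
  obtain ⟨k, rfl⟩ : ∃ k, n = k + 1 := ⟨n - 1, by omega⟩
  have : (k + 1) * (k + 1) = (k + 1) * k + (k + 1) := by ring
  rw [this]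
  simp
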